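/- For every s ∈ ℝ, and every 0 ≤ i ≤ n, the mixed iterated Bessel derivative of f₀(r) = (1+r²)^{s/2} satisfies D_i^{n−i} D_0^i f₀(r) = Σ_{ℓ=i}^{n} C(n−i, ℓ−i) · ∏_{j=0}^{n−ℓ−1} 2(i−j) · ∏_{j=0}^{ℓ−1}(s−2j) · r^{2ℓ−n} (1+r²)^{s/2−ℓ}, where C denotes binomial coefficients; in particular each such derivative extends continuously to [0,∞). -/

import Mathlib

/-- The Bessel operator `D_κ f (r) = f'(r) + (κ/r) f(r)`. -/
noncomputable def besselD (κ : ℝ) (f : ℝ → ℂ) : ℝ → ℂ :=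
  fun r => deriv f r + ((κ / r : ℝ) : ℂ) * f r

/-- The iterated Bessel operator `D_κ^n = D_{κ-(n-1)} ∘ ⋯ ∘ D_{κ-1} ∘ D_κ`. -/
noncomputable def besselDIter (κ : ℝ) : ℕ → (ℝ → ℂ) → (ℝ → ℂ)
  | 0, f => f
  | n + 1, f => besselD (κ - n) (besselDIter κ n f)

namespace BesselAux

open Finset

/-- basic building block `r^a (1+r²)^b`. -/
noncomputable def T (a : ℤ) (b : ℝ) (r : ℝ) : ℂ :=
  (r : ℂ) ^ a * (((1 + r ^ 2) ^ b : ℝ) : ℂ)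

lemma hasDerivAt_T (a : ℤ) (b : ℝ) {r : ℝ} (hr : 0 < r) :
    HasDerivAt (T a b) ((a : ℂ) * T (a - 1) b r + ((2 * b : ℝ) : ℂ) * T (a + 1) (b - 1) r) r := by
  have hr0 : (r : ℂ) ≠ 0 := by exact_mod_cast hr.ne'
  have h1 : HasDerivAt (fun x : ℝ => ((x : ℂ)) ^ a) ((a : ℂ) * (r : ℂ) ^ (a - 1)) r :=
    (hasDerivAt_zpow a (r : ℂ) (Or.inl hr0)).comp_ofReal
  have hpos : (0 : ℝ) < 1 + r ^ 2 := by positivity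
  have hinner : HasDerivAt (fun x : ℝ => 1 + x ^ 2) (2 * r) r := by
    simpa using ((hasDerivAt_pow 2 r).const_add 1)
  have h2 : HasDerivAt (fun x : ℝ => (1 + x ^ 2) ^ b) (2 * r * b * (1 + r ^ 2) ^ (b - 1)) r :=
    hinner.rpow_const (Or.inl hpos.ne')
  have h2' : HasDerivAt (fun x : ℝ => (((1 + x ^ 2) ^ b : ℝ) : ℂ))
      ((2 * r * b * (1 + r ^ 2) ^ (b - 1) : ℝ) : ℂ) r := h2.ofReal_comp
  have h := h1.mul h2'
  refine h.congr_deriv ?_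
  unfold T
  have hz : (r : ℂ) ^ (a + 1) = (r : ℂ) ^ a * r := zpow_add_one₀ hr0 a
  have hz' : (r : ℂ) ^ a = (r : ℂ) ^ (a - 1) * r := by
    rw [← zpow_add_one₀ hr0 (a - 1)]; ring_nf
  push_cast
  rw [hz, hz']
  ring

lemma T_shift {a : ℤ} {b : ℝ} {r : ℝ} (hr : 0 < r) :
    T a b r = T (a - 1) b r * r := by
  have hr0 : (r : ℂ) ≠ 0 := by exact_mod_cast hr.ne'
  unfold T
  rw [show (a : ℤ) = (a - 1) + 1 by ring, zpow_add_one₀ hr0 (a - 1)]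
  ring

/-- `besselD` applied to a function that agrees with a linear combination of `T`'s on `(0,∞)`. -/
lemma besselD_sum (κ : ℝ) (N : ℕ) (c : ℕ → ℂ) (a : ℕ → ℤ) (b : ℕ → ℝ) (f : ℝ → ℂ)
    (hf : ∀ x > (0:ℝ), f x = ∑ k ∈ range N, c k * T (a k) (b k) x) {r : ℝ} (hr : 0 < r) :
    besselD κ f r = ∑ k ∈ range N,
      (c k * (((a k : ℂ)) + (κ : ℂ)) * T (a k - 1) (b k) r
        + c k * ((2 * b k : ℝ) : ℂ) * T (a k + 1) (b k - 1) r) := by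
  have hS : HasDerivAt (fun x => ∑ k ∈ range N, c k * T (a k) (b k) x)
      (∑ k ∈ range N, c k * ((a k : ℂ) * T (a k - 1) (b k) r
        + ((2 * b k : ℝ) : ℂ) * T (a k + 1) (b k - 1) r)) r :=
    HasDerivAt.fun_sum (fun k _ => ((hasDerivAt_T (a k) (b k) hr).const_mul (c k)))
  have hev : f =ᶠ[nhds r] fun x => ∑ k ∈ range N, c k * T (a k) (b k) x := by
    filter_upwards [Ioi_mem_nhds hr] with x hx using hf x hx
  have hder : deriv f r = ∑ k ∈ range N, c k * ((a k : ℂ) * T (a k - 1) (b k) r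
      + ((2 * b k : ℝ) : ℂ) * T (a k + 1) (b k - 1) r) := by
    rw [hev.deriv_eq, hS.deriv]
  have hr0 : (r : ℂ) ≠ 0 := by exact_mod_cast hr.ne'
  show deriv f r + ((κ / r : ℝ) : ℂ) * f r = _
  rw [hder, hf r hr, Finset.mul_sum, ← Finset.sum_add_distrib]
  refine Finset.sum_congr rfl fun k _ => ?_
  rw [T_shift (a := a k) (b := b k) hr]
  push_cast
  field_simp
  ring

/-- coefficient in the mixed-derivative expansion. -/
noncomputable def coeff (i : ℕ) (s : ℝ) (m k : ℕ) : ℂ :=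
  (Nat.choose m k : ℂ) * (∏ j ∈ range (m - k), (2 * ((i : ℂ) - (j : ℂ))))
    * (∏ j ∈ range k, ((s : ℂ) - 2 * ((i : ℂ) + (j : ℂ))))

lemma coeff_top (i : ℕ) (s : ℝ) (m : ℕ) : coeff i s m (m + 1) = 0 := by
  simp [coeff, Nat.choose_succ_self]

lemma coeff_zero_succ (i : ℕ) (s : ℝ) (m : ℕ) :
    coeff i s (m + 1) 0 = coeff i s m 0 * (2 * ((i : ℂ) - (m : ℂ))) := by
  simp [coeff, Finset.prod_range_succ]

lemma coeff_succ_succ (i : ℕ) (s : ℝ) (m k : ℕ) (hk : k ≤ m) :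
    coeff i s (m + 1) (k + 1)
      = coeff i s m (k + 1) * (2 * ((i : ℂ) - (m : ℂ) + ((k : ℂ) + 1)))
        + coeff i s m k * ((s : ℂ) - 2 * ((i : ℂ) + (k : ℂ))) := by
  rcases eq_or_lt_of_le hk with rfl | hlt
  · simp [coeff, Nat.choose_succ_self, Nat.choose_self, Finset.prod_range_succ]
  · obtain ⟨e, rfl⟩ : ∃ e, m = k + 1 + e := ⟨m - (k+1), by omega⟩
    have h1 : k + 1 + e - (k + 1) = e := by omega
    have h2 : k + 1 + e + 1 - (k + 1) = e + 1 := by omega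
    have h3 : k + 1 + e - k = e + 1 := by omega
    have hc : (Nat.choose (k + 1 + e + 1) (k + 1) : ℂ)
        = (Nat.choose (k + 1 + e) (k + 1) : ℂ) + (Nat.choose (k + 1 + e) k : ℂ) := by
      rw [show k + 1 + e + 1 = (k + e + 1) + 1 by ring, Nat.choose_succ_succ (k + e + 1) k]
      push_cast
      rw [show k + e + 1 = k + 1 + e by ring]
      ring
    unfold coeff
    rw [h1, h2, h3, hc, Finset.prod_range_succ, Finset.prod_range_succ (f := fun j => ((s:ℂ) - 2*((i:ℂ)+(j:ℂ))))]
    have hie : (i : ℂ) - (↑(k + 1 + e) : ℂ) + ((k : ℂ) + 1) = (i : ℂ) - (e : ℂ) := by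
      push_cast; ring
    push_cast
    ring

/-- `D_0^i f₀` (with the decreasing index convention) is `∏(s-2j) ⬝ r^i (1+r²)^{s/2-i}`. -/
lemma pure_part (s : ℝ) :
    ∀ m : ℕ, ∀ r > (0:ℝ),
      besselDIter 0 m (fun t : ℝ => (((1 + t ^ 2) ^ (s / 2) : ℝ) : ℂ)) r
        = (∏ j ∈ range m, ((s : ℂ) - 2 * (j : ℂ))) * T m (s / 2 - m) r := by
  intro m
  induction m with
  | zero =>
      intro r hr
      simp [besselDIter, T]
  | succ m ih =>
      intro r hr
      show besselD (0 - m) (besselDIter 0 m _) r = _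
      rw [besselD_sum (0 - m) 1 (fun _ => ∏ j ∈ range m, ((s : ℂ) - 2 * (j : ℂ)))
        (fun _ => (m : ℤ)) (fun _ => s / 2 - m) _
        (fun x hx => by rw [ih x hx, Finset.sum_range_one]) hr]
      rw [Finset.sum_range_one, Finset.prod_range_succ]
      have e1 : ((m : ℤ) : ℂ) + (((0:ℝ) - m : ℝ)) = 0 := by push_cast; ring
      have e2 : ((2 * (s / 2 - (m:ℝ)) : ℝ) : ℂ) = (s : ℂ) - 2 * (m : ℂ) := by push_cast; ring
      rw [e1, e2]
      have e3 : ((m : ℤ) + 1) = ((m + 1 : ℕ) : ℤ) := by push_cast; ring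
      have e4 : s / 2 - (m : ℝ) - 1 = s / 2 - ((m + 1 : ℕ) : ℝ) := by push_cast; ring
      rw [e3, e4]
      ring

lemma T_congr {a₁ a₂ : ℤ} {b₁ b₂ : ℝ} (r : ℝ) (ha : a₁ = a₂) (hb : b₁ = b₂) :
    T a₁ b₁ r = T a₂ b₂ r := by rw [ha, hb]

/-- opaque wrapper for the `T`-terms occurring at level `m`. -/
noncomputable def Uf (i m k : ℕ) (s : ℝ) (r : ℝ) : ℂ :=
  T ((i : ℤ) - m + 2 * k) (s / 2 - (i : ℝ) - k) r

/-- main induction: the mixed derivative as a sum of `T`'s. -/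
lemma mixed_part (s : ℝ) (i : ℕ) :
    ∀ m : ℕ, ∀ r > (0:ℝ),
      besselDIter (i : ℝ) m
          (besselDIter 0 i (fun t : ℝ => (((1 + t ^ 2) ^ (s / 2) : ℝ) : ℂ))) r
        = ∑ k ∈ range (m + 1),
            ((∏ j ∈ range i, ((s : ℂ) - 2 * (j : ℂ))) * coeff i s m k) * Uf i m k s r := by
  intro m
  induction m with
  | zero =>
      intro r hr
      show besselDIter 0 i _ r = _
      rw [pure_part s i r hr]
      rw [Finset.sum_range_one]
      simp only [Uf, coeff]
      rw [T_congr r (a₂ := (i:ℤ)) (b₂ := s/2 - i) (by push_cast; ring) (by push_cast; ring)]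
      simp
  | succ m ih =>
      intro r hr
      show besselD ((i:ℝ) - m) (besselDIter (i:ℝ) m _) r = _
      rw [besselD_sum ((i:ℝ) - m) (m + 1)
        (fun k => (∏ j ∈ range i, ((s : ℂ) - 2 * (j : ℂ))) * coeff i s m k)
        (fun k => (i : ℤ) - m + 2 * k) (fun k => s / 2 - i - k) _
        (fun x hx => by rw [ih x hx]; exact Finset.sum_congr rfl fun k _ => by rw [Uf]) hr]
      set Ci : ℂ := ∏ j ∈ range i, ((s : ℂ) - 2 * (j : ℂ)) with hCi
      have hterm : ∀ k ∈ range (m + 1),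
          (Ci * coeff i s m k * ((((i : ℤ) - m + 2 * k : ℤ) : ℂ) + (((i:ℝ) - m : ℝ) : ℂ))
              * T ((i : ℤ) - m + 2 * k - 1) (s / 2 - i - k) r
            + Ci * coeff i s m k * ((2 * (s / 2 - i - k) : ℝ) : ℂ)
              * T ((i : ℤ) - m + 2 * k + 1) (s / 2 - i - k - 1) r)
          = Ci * coeff i s m k * (2 * ((i:ℂ) - m + k)) * Uf i (m+1) k s r
            + Ci * coeff i s m k * ((s:ℂ) - 2 * ((i:ℂ) + k)) * Uf i (m+1) (k+1) s r := by
        intro k _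
        rw [T_congr r (a₁ := (i:ℤ) - m + 2 * k - 1) (a₂ := (i:ℤ) - ((m+1:ℕ):ℤ) + 2 * (k:ℤ))
            (b₁ := s/2 - (i:ℝ) - k) (b₂ := s/2 - (i:ℝ) - (k:ℝ)) (by push_cast; ring) rfl,
          T_congr r (a₁ := (i:ℤ) - m + 2 * k + 1) (a₂ := (i:ℤ) - ((m+1:ℕ):ℤ) + 2 * ((k+1:ℕ):ℤ))
            (b₁ := s/2 - (i:ℝ) - (k:ℝ) - 1) (b₂ := s/2 - (i:ℝ) - ((k+1:ℕ):ℝ))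
            (by push_cast; ring) (by push_cast; ring)]
        rw [show T ((i:ℤ) - ((m+1:ℕ):ℤ) + 2 * k) (s/2 - (i:ℝ) - k) r = Uf i (m+1) k s r from rfl,
          show T ((i:ℤ) - ((m+1:ℕ):ℤ) + 2 * ((k+1:ℕ):ℤ)) (s/2 - (i:ℝ) - ((k+1:ℕ):ℝ)) r
            = Uf i (m+1) (k+1) s r from rfl]
        have hc1 : ((((i : ℤ) - m + 2 * k : ℤ) : ℂ) + (((i:ℝ) - m : ℝ) : ℂ))
            = 2 * ((i:ℂ) - m + k) := by push_cast; ring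
        have hc2 : ((2 * (s / 2 - (i:ℝ) - k) : ℝ) : ℂ) = (s:ℂ) - 2 * ((i:ℂ) + k) := by
          push_cast; ring
        rw [hc1, hc2]
      rw [Finset.sum_congr rfl hterm, Finset.sum_add_distrib]
      have hfirst : ∑ k ∈ range (m + 1), Ci * coeff i s m k * (2 * ((i:ℂ) - m + k)) * Uf i (m+1) k s r
          = ∑ k ∈ range (m + 2), Ci * coeff i s m k * (2 * ((i:ℂ) - m + k)) * Uf i (m+1) k s r := by
        rw [Finset.sum_range_succ (n := m + 1), coeff_top]
        ring
      have hsecond : ∑ k ∈ range (m + 1),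
            Ci * coeff i s m k * ((s:ℂ) - 2 * ((i:ℂ) + k)) * Uf i (m+1) (k+1) s r
          = ∑ k ∈ range (m + 2), (if k = 0 then 0 else
              Ci * coeff i s m (k - 1) * ((s:ℂ) - 2 * ((i:ℂ) + ((k - 1 : ℕ) : ℂ))) * Uf i (m+1) k s r) := by
        conv_rhs => rw [Finset.sum_range_succ' _ (m + 1)]
        simp
      rw [hfirst, hsecond, ← Finset.sum_add_distrib]
      refine Finset.sum_congr rfl fun k hk => ?_
      rcases k with _ | k
      · rw [if_pos (rfl : (0:ℕ) = 0), coeff_zero_succ]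
        push_cast
        ring
      · have hkm : k ≤ m := by
          simp only [Finset.mem_range] at hk; omega
        simp only [if_neg (Nat.succ_ne_zero _), Nat.add_sub_cancel]
        rw [coeff_succ_succ i s m k hkm]
        push_cast
        ring

end BesselAux

open Finset BesselAux

/-- Mixed iterated Bessel derivatives of `f₀(r) = (1+r²)^{s/2}`: explicit sum formula,
and continuous extension to `[0,∞)`. -/
theorem bessel_sobolev_weight (s : ℝ) (i n : ℕ) (hin : i ≤ n) :
    (∀ r > (0 : ℝ),
        besselDIter (i : ℝ) (n - i)
            (besselDIter 0 i (fun t : ℝ => (((1 + t ^ 2) ^ (s / 2) : ℝ) : ℂ))) r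
          = ∑ ℓ ∈ Finset.Icc i n,
              (Nat.choose (n - i) (ℓ - i) : ℂ)
                * (∏ j ∈ Finset.range (n - ℓ), (2 * ((i : ℂ) - (j : ℂ))))
                * (∏ j ∈ Finset.range ℓ, ((s : ℂ) - 2 * (j : ℂ)))
                * (r : ℂ) ^ ((2 * ℓ : ℤ) - (n : ℤ))
                * (((1 + r ^ 2) ^ (s / 2 - ℓ) : ℝ) : ℂ))
    ∧ ∃ g : ℝ → ℂ, ContinuousOn g (Set.Ici 0) ∧
        ∀ r > (0 : ℝ), g r =
          besselDIter (i : ℝ) (n - i)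
            (besselDIter 0 i (fun t : ℝ => (((1 + t ^ 2) ^ (s / 2) : ℝ) : ℂ))) r := by
  -- the explicit sum formula, valid for all r > 0
  have key : ∀ r > (0:ℝ),
      besselDIter (i : ℝ) (n - i)
          (besselDIter 0 i (fun t : ℝ => (((1 + t ^ 2) ^ (s / 2) : ℝ) : ℂ))) r
        = ∑ ℓ ∈ Finset.Icc i n,
            (Nat.choose (n - i) (ℓ - i) : ℂ)
              * (∏ j ∈ Finset.range (n - ℓ), (2 * ((i : ℂ) - (j : ℂ))))
              * (∏ j ∈ Finset.range ℓ, ((s : ℂ) - 2 * (j : ℂ)))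
              * (r : ℂ) ^ ((2 * ℓ : ℤ) - (n : ℤ))
              * (((1 + r ^ 2) ^ (s / 2 - ℓ) : ℝ) : ℂ) := by
    intro r hr
    rw [mixed_part s i (n - i) r hr]
    rw [show Finset.Icc i n = Finset.Ico i (n + 1) by rw [Finset.Ico_add_one_right_eq_Icc],
      Finset.sum_Ico_eq_sum_range]
    rw [show n + 1 - i = (n - i) + 1 by omega]
    refine Finset.sum_congr rfl fun k hk => ?_
    have hk' : k ≤ n - i := by simp only [Finset.mem_range] at hk; omega
    have h1 : (i + k) - i = k := by omega
    have h2 : n - (i + k) = (n - i) - k := by omega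
    rw [h1, h2]
    unfold coeff Uf
    rw [T_congr r (a₂ := (2 * (i + k : ℕ) : ℤ) - (n:ℤ)) (b₂ := s / 2 - ((i + k : ℕ) : ℝ))
      (by push_cast [Nat.cast_sub hin]; ring) (by push_cast; ring)]
    rw [Finset.prod_range_add (fun j => ((s : ℂ) - 2 * (j : ℂ))) i k]
    unfold T
    push_cast
    ring
  refine ⟨key, ?_⟩
  -- the continuous extension
  refine ⟨fun r => ∑ ℓ ∈ Finset.Icc i n,
      (Nat.choose (n - i) (ℓ - i) : ℂ)
        * (∏ j ∈ Finset.range (n - ℓ), (2 * ((i : ℂ) - (j : ℂ))))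
        * (∏ j ∈ Finset.range ℓ, ((s : ℂ) - 2 * (j : ℂ)))
        * (r : ℂ) ^ (2 * ℓ - n : ℕ)
        * (((1 + r ^ 2) ^ (s / 2 - ℓ) : ℝ) : ℂ), ?_, ?_⟩
  · apply Continuous.continuousOn
    refine continuous_finset_sum _ fun ℓ _ => ?_
    have hb : Continuous fun r : ℝ => (((1 + r ^ 2) ^ (s / 2 - ℓ) : ℝ) : ℂ) := by
      refine Complex.continuous_ofReal.comp ?_
      refine Continuous.rpow_const ?_ fun x => Or.inl (by positivity)
      exact (continuous_const.add (continuous_pow 2))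
    exact ((continuous_const.mul ((Complex.continuous_ofReal.pow _))).mul hb)
  · intro r hr
    rw [key r hr]
    refine Finset.sum_congr rfl fun ℓ hℓ => ?_
    simp only [Finset.mem_Icc] at hℓ
    by_cases hl : n ≤ 2 * ℓ
    · have : ((r : ℂ)) ^ (2 * ℓ - n : ℕ) = (r : ℂ) ^ ((2 * ℓ : ℤ) - (n : ℤ)) := by
        rw [← zpow_natCast]
        congr 1
        omega
      rw [this]
    · have hz : (∏ j ∈ Finset.range (n - ℓ), (2 * ((i : ℂ) - (j : ℂ)))) = 0 := by
        refine Finset.prod_eq_zero (Finset.mem_range.2 (show i < n - ℓ by omega)) ?_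
        simp
      rw [hz]
      ring
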